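/- Let E_h, E_x, E_y, H be finite-dimensional real inner product spaces, f : E_h × E_x × H → E_h a C¹ transition map, g : E_h → E_y a C¹ prediction map, x₁, …, x_L ∈ E_x inputs, and targets y₁, …, y_L ∈ E_y. Define head maps αᵢ(h, θ) by α₀(h, θ) = h, αᵢ(h, θ) = f(α_{i−1}(h, θ), xᵢ, θ), write hᵢ = αᵢ(h, θ), ŷᵢ = g(hᵢ), eᵢ = ŷᵢ − yᵢ, μ_{j,i} = f_j ∘ ⋯ ∘ fᵢ (identity for j < i), and εᵢ = Σ_{j=i}^{L} D*μ_{j,i+1}(hᵢ) · D*g(hⱼ) · eⱼ. Then the gradient with respect to θ of the total loss θ ↦ Σ_{i=1}^{L} ½‖g(αᵢ(h, θ)) − yᵢ‖² equals Σ_{i=1}^{L} ∇*_θ f(h_{i−1}, xᵢ, θ) · εᵢ. -/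

import Mathlib

/-- The RNN head map: `headMap f x 0 h θ = h` and
`headMap f x (i+1) h θ = f (headMap f x i h θ, x (i+1), θ)`, i.e. `αᵢ(h, θ)`. -/
def headMap {Eh Ex H : Type*} (f : Eh × Ex × H → Eh) (x : ℕ → Ex) :
    ℕ → Eh → H → Eh
  | 0, h, _ => h
  | i + 1, h, θ => f (headMap f x i h θ, x (i + 1), θ)

/-- `muChain f i j = μ_{j,i} = f_j ∘ ⋯ ∘ f_i` for `i ≤ j`, and the identity for `j < i`
(indices are 1-based: `muChain f i 0 = id`). -/
def muChain {E : Type*} (f : ℕ → E → E) (i : ℕ) : ℕ → E → E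
  | 0 => id
  | j + 1 => if j + 1 < i then id else f (j + 1) ∘ muChain f i j

open scoped RealInnerProductSpace

/- ======================= auxiliary lemmas ======================= -/

lemma muChain_of_lt {E : Type*} (f : ℕ → E → E) {i j : ℕ} (hj : j < i) :
    muChain f i j = id := by
  cases j with
  | zero => rfl
  | succ j => simp [muChain, hj]

lemma muChain_of_ge {E : Type*} (f : ℕ → E → E) {i j : ℕ} (hj : ¬ j + 1 < i) :
    muChain f i (j + 1) = f (j + 1) ∘ muChain f i j := by
  simp [muChain, hj]

noncomputable section AuxRNN

variable {Eh Ex H : Type*}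
  [NormedAddCommGroup Eh] [InnerProductSpace ℝ Eh]
  [NormedAddCommGroup Ex] [InnerProductSpace ℝ Ex]
  [NormedAddCommGroup H] [InnerProductSpace ℝ H]
  (f : Eh × Ex × H → Eh) (x : ℕ → Ex) (θ : H) (h : Eh)

/-- Step maps. -/
def Fstep : ℕ → Eh → Eh := fun k h' => f (h', x k, θ)

/-- Hidden states. -/
def hsm (i : ℕ) : Eh := headMap f x i h θ

/-- Parameter partial derivatives `∇_θ f(h_{k-1}, x_k, θ)`. -/
def Bm (k : ℕ) : H →L[ℝ] Eh :=
  fderiv ℝ (fun θ' => f (hsm f x θ h (k - 1), x k, θ')) θ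

/-- Derivatives of accumulated evolutions `D μ_{j,k+1}(h_k)`. -/
def Dmu (j k : ℕ) : Eh →L[ℝ] Eh :=
  fderiv ℝ (muChain (Fstep f x θ) (k + 1) j) (hsm f x θ h k)

/-- Total derivative of `θ' ↦ αᵢ(h, θ')`. -/
def Am (i : ℕ) : H →L[ℝ] Eh :=
  ∑ k ∈ Finset.Icc 1 i, (Dmu f x θ h i k).comp (Bm f x θ h k)

variable (hf : Differentiable ℝ f)

include hf in
lemma Fstep_diff (k : ℕ) : Differentiable ℝ (Fstep f x θ k) :=
  hf.comp (differentiable_id.prodMk (differentiable_const (x k, θ)))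

include hf in
lemma muChain_diff (k j : ℕ) : Differentiable ℝ (muChain (Fstep f x θ) k j) := by
  induction j with
  | zero => exact differentiable_id
  | succ j ih =>
    by_cases hj : j + 1 < k
    · rw [muChain_of_lt _ hj]; exact differentiable_id
    · rw [muChain_of_ge _ hj]
      exact (Fstep_diff f x θ hf (j + 1)).comp ih

lemma muChain_val {k j : ℕ} (hkj : k ≤ j) :
    muChain (Fstep f x θ) (k + 1) j (hsm f x θ h k) = hsm f x θ h j := by
  induction j, hkj using Nat.le_induction with
  | base => rw [muChain_of_lt _ (Nat.lt_succ_self k)]; rfl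
  | succ j hkj ih =>
    rw [muChain_of_ge _ (by omega)]
    simp only [Function.comp_apply, ih]
    rfl

include hf in
lemma Dmu_succ {k j : ℕ} (hkj : k ≤ j) :
    Dmu f x θ h (j + 1) k =
      (fderiv ℝ (Fstep f x θ (j + 1)) (hsm f x θ h j)).comp (Dmu f x θ h j k) := by
  unfold Dmu
  rw [muChain_of_ge _ (by omega),
    fderiv_comp _ ((Fstep_diff f x θ hf (j + 1)).differentiableAt)
      ((muChain_diff f x θ hf (k + 1) j).differentiableAt),
    muChain_val f x θ h hkj]

lemma Dmu_self (k : ℕ) : Dmu f x θ h (k) (k) = ContinuousLinearMap.id ℝ Eh := by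
  unfold Dmu
  rw [muChain_of_lt _ (Nat.lt_succ_self k)]
  exact fderiv_id

include hf in
lemma hasFDerivAt_headMap (i : ℕ) :
    HasFDerivAt (fun θ' => headMap f x i h θ') (Am f x θ h i) θ := by
  induction i with
  | zero =>
    have : Am f x θ h 0 = 0 := by simp [Am]
    rw [this]
    exact hasFDerivAt_const h θ
  | succ i ih =>
    set Df := fderiv ℝ f (hsm f x θ h i, x (i + 1), θ) with hDf
    have hfp : HasFDerivAt f Df (hsm f x θ h i, x (i + 1), θ) := (hf _).hasFDerivAt
    have hpair : HasFDerivAt (fun θ' => ((headMap f x i h θ' : Eh), x (i + 1), θ'))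
        ((Am f x θ h i).prod ((0 : H →L[ℝ] Ex).prod (ContinuousLinearMap.id ℝ H))) θ :=
      ih.prodMk ((hasFDerivAt_const (x (i + 1)) θ).prodMk (hasFDerivAt_id θ))
    have hcomp := hfp.comp θ hpair
    have hF : fderiv ℝ (Fstep f x θ (i + 1)) (hsm f x θ h i) =
        Df.comp ((ContinuousLinearMap.id ℝ Eh).prod (0 : Eh →L[ℝ] Ex × H)) := by
      have hc := hfp.comp (hsm f x θ h i)
        (show HasFDerivAt (fun z : Eh => (z, x (i + 1), θ)) ((ContinuousLinearMap.id ℝ Eh).prod (0 : Eh →L[ℝ] Ex × H)) (hsm f x θ h i) from (hasFDerivAt_id (hsm f x θ h i)).prodMk (hasFDerivAt_const (x (i + 1), θ) (hsm f x θ h i)))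
      exact (HasFDerivAt.fderiv hc : _)
    have hB : Bm f x θ h (i + 1) =
        Df.comp ((0 : H →L[ℝ] Eh).prod ((0 : H →L[ℝ] Ex).prod (ContinuousLinearMap.id ℝ H))) := by
      have : HasFDerivAt (fun θ' => f (hsm f x θ h i, x (i + 1), θ'))
          (Df.comp ((0 : H →L[ℝ] Eh).prod
            ((0 : H →L[ℝ] Ex).prod (ContinuousLinearMap.id ℝ H)))) θ :=
        hfp.comp θ ((hasFDerivAt_const _ _).prodMk
          ((hasFDerivAt_const _ _).prodMk (hasFDerivAt_id θ)))
      simpa [Bm] using this.fderiv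
    have hAsucc : Am f x θ h (i + 1) =
        Df.comp ((Am f x θ h i).prod ((0 : H →L[ℝ] Ex).prod (ContinuousLinearMap.id ℝ H))) := by
      have hsum : Am f x θ h (i + 1) =
          (∑ k ∈ Finset.Icc 1 i, (Dmu f x θ h (i + 1) k).comp (Bm f x θ h k)) +
            (Dmu f x θ h (i + 1) (i + 1)).comp (Bm f x θ h (i + 1)) := by
        unfold Am
        rw [Finset.sum_Icc_succ_top (by omega)]
      rw [hsum, Dmu_self]
      ext v
      have hterm : ∀ k ∈ Finset.Icc 1 i,
          (Dmu f x θ h (i + 1) k) ((Bm f x θ h k) v) =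
            (fderiv ℝ (Fstep f x θ (i + 1)) (hsm f x θ h i))
              ((Dmu f x θ h i k) ((Bm f x θ h k) v)) := by
        intro k hk
        rw [Dmu_succ f x θ h hf (Finset.mem_Icc.mp hk).2]
        rfl
      have hAapp : (Am f x θ h i) v =
          ∑ k ∈ Finset.Icc 1 i, (Dmu f x θ h i k) ((Bm f x θ h k) v) := by
        simp [Am]
      simp only [ContinuousLinearMap.add_apply, ContinuousLinearMap.sum_apply,
        ContinuousLinearMap.coe_comp', Function.comp_apply, ContinuousLinearMap.coe_id',
        id_eq, ContinuousLinearMap.prod_apply, ContinuousLinearMap.zero_apply]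
      rw [Finset.sum_congr rfl hterm, ← map_sum, ← hAapp, hF, hB]
      simp only [ContinuousLinearMap.coe_comp', Function.comp_apply,
        ContinuousLinearMap.prod_apply, ContinuousLinearMap.coe_id', id_eq,
        ContinuousLinearMap.zero_apply]
      rw [← map_add]
      congr 1
      simp [Prod.ext_iff]
    rw [hAsucc]
    exact hcomp

end AuxRNN

/-- total BPTT gradient with respect to the transition parameters.
With transition `f`, prediction `g`, head maps `αᵢ`, hidden states `hᵢ = αᵢ(h,θ)`,
`ŷᵢ = g(hᵢ)`, `eᵢ = ŷᵢ − yᵢ`, `μ_{j,i} = f_j ∘ ⋯ ∘ f_i`, and backpropagated errors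
`εᵢ = Σ_{j=i}^{L} D*μ_{j,i+1}(hᵢ) · D*g(hⱼ) · eⱼ`, the gradient of the total loss
`θ ↦ Σ_{i=1}^{L} ½‖g(αᵢ(h,θ)) − yᵢ‖²` equals `Σ_{i=1}^{L} ∇*_θ f(h_{i−1}, xᵢ, θ) · εᵢ`. -/
theorem stmt_16
    {Eh Ex Ey H : Type*}
    [NormedAddCommGroup Eh] [InnerProductSpace ℝ Eh] [FiniteDimensional ℝ Eh]
    [NormedAddCommGroup Ex] [InnerProductSpace ℝ Ex] [FiniteDimensional ℝ Ex]
    [NormedAddCommGroup Ey] [InnerProductSpace ℝ Ey] [FiniteDimensional ℝ Ey]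
    [NormedAddCommGroup H] [InnerProductSpace ℝ H] [FiniteDimensional ℝ H]
    (f : Eh × Ex × H → Eh) (g : Eh → Ey)
    (hf : ContDiff ℝ 1 f) (hg : ContDiff ℝ 1 g)
    (L : ℕ) (x : ℕ → Ex) (y : ℕ → Ey) (θ : H) (h : Eh)
    (eps : ℕ → Eh)
    (heps : ∀ i, eps i =
      ∑ j ∈ Finset.Icc i L,
        ContinuousLinearMap.adjoint
          (fderiv ℝ (muChain (fun k h' => f (h', x k, θ)) (i + 1) j)
            (headMap f x i h θ))
          (ContinuousLinearMap.adjoint (fderiv ℝ g (headMap f x j h θ))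
            (g (headMap f x j h θ) - y j))) :
    gradient
        (fun θ' => ∑ i ∈ Finset.Icc 1 L,
          (1 / 2 : ℝ) * ‖g (headMap f x i h θ') - y i‖ ^ 2) θ =
      ∑ i ∈ Finset.Icc 1 L,
        ContinuousLinearMap.adjoint
          (fderiv ℝ (fun θ' => f (headMap f x (i - 1) h θ, x i, θ')) θ) (eps i) := by
  classical
  have hfd : Differentiable ℝ f := hf.differentiable one_ne_zero
  have hgd : Differentiable ℝ g := hg.differentiable one_ne_zero
  set e : ℕ → Ey := fun i => g (headMap f x i h θ) - y i with he
  set P : ℕ → H →L[ℝ] Ey :=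
    fun i => (fderiv ℝ g (hsm f x θ h i)).comp (Am f x θ h i) with hP
  have hq : ∀ i, HasFDerivAt (fun θ' => g (headMap f x i h θ') - y i) (P i) θ := by
    intro i
    exact ((hgd (hsm f x θ h i)).hasFDerivAt.comp θ
      (hasFDerivAt_headMap f x θ h hfd i)).sub_const (y i)
  have hterm : ∀ i, HasFDerivAt
      (fun θ' => (1 / 2 : ℝ) * ‖g (headMap f x i h θ') - y i‖ ^ 2)
      ((1 / 2 : ℝ) • ((fderivInnerCLM ℝ (e i, e i)).comp ((P i).prod (P i)))) θ := by
    intro i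
    have hin := HasFDerivAt.inner ℝ (hq i) (hq i)
    have := hin.const_mul (1 / 2 : ℝ)
    simpa only [real_inner_self_eq_norm_sq] using this
  have htot := HasFDerivAt.fun_sum (fun i (_ : i ∈ Finset.Icc 1 L) => hterm i)
  set G := ∑ i ∈ Finset.Icc 1 L,
        ContinuousLinearMap.adjoint
          (fderiv ℝ (fun θ' => f (headMap f x (i - 1) h θ, x i, θ')) θ) (eps i) with hG
  have hGrad : HasGradientAt
      (fun θ' => ∑ i ∈ Finset.Icc 1 L,
          (1 / 2 : ℝ) * ‖g (headMap f x i h θ') - y i‖ ^ 2) G θ := by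
    rw [hasGradientAt_iff_hasFDerivAt]
    have hEq : (InnerProductSpace.toDual ℝ H) G =
        ∑ i ∈ Finset.Icc 1 L,
          (1 / 2 : ℝ) • ((fderivInnerCLM ℝ (e i, e i)).comp ((P i).prod (P i))) := by
      apply ContinuousLinearMap.ext
      intro v
      have hL : (InnerProductSpace.toDual ℝ H) G v = ⟪G, v⟫ := by
        exact InnerProductSpace.toDual_apply_apply
      rw [hL]
      -- expand the right-hand side
      have hRi : ∀ i, ((1 / 2 : ℝ) •
            ((fderivInnerCLM ℝ (e i, e i)).comp ((P i).prod (P i)))) v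
          = ⟪e i, (fderiv ℝ g (hsm f x θ h i)) ((Am f x θ h i) v)⟫ := by
        intro i
        simp only [ContinuousLinearMap.smul_apply, ContinuousLinearMap.coe_comp',
          Function.comp_apply, ContinuousLinearMap.prod_apply, fderivInnerCLM_apply,
          smul_eq_mul, hP]
        rw [real_inner_comm ((fderiv ℝ g (hsm f x θ h i)) ((Am f x θ h i) v)) (e i)]
        ring
      have hAm : ∀ i, (Am f x θ h i) v
          = ∑ k ∈ Finset.Icc 1 i, (Dmu f x θ h i k) ((Bm f x θ h k) v) := by
        intro i; simp [Am]
      have hRHS : (∑ i ∈ Finset.Icc 1 L,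
            (1 / 2 : ℝ) • ((fderivInnerCLM ℝ (e i, e i)).comp ((P i).prod (P i)))) v
          = ∑ i ∈ Finset.Icc 1 L, ∑ k ∈ Finset.Icc 1 i,
              ⟪(ContinuousLinearMap.adjoint (Bm f x θ h k))
                ((ContinuousLinearMap.adjoint (Dmu f x θ h i k))
                  ((ContinuousLinearMap.adjoint (fderiv ℝ g (hsm f x θ h i))) (e i))), v⟫ := by
        rw [ContinuousLinearMap.sum_apply]
        refine Finset.sum_congr rfl fun i _ => ?_
        rw [hRi i, hAm i, map_sum, inner_sum]
        refine Finset.sum_congr rfl fun k _ => ?_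
        rw [← ContinuousLinearMap.adjoint_inner_left (fderiv ℝ g (hsm f x θ h i)),
          ← ContinuousLinearMap.adjoint_inner_left (Dmu f x θ h i k),
          ← ContinuousLinearMap.adjoint_inner_left (Bm f x θ h k)]
      rw [hRHS]
      -- expand the left-hand side
      have hBk : ∀ k, fderiv ℝ (fun θ' => f (headMap f x (k - 1) h θ, x k, θ')) θ
          = Bm f x θ h k := by
        intro k; rfl
      have hLHS : ⟪G, v⟫ = ∑ k ∈ Finset.Icc 1 L, ∑ j ∈ Finset.Icc k L,
          ⟪(ContinuousLinearMap.adjoint (Bm f x θ h k))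
            ((ContinuousLinearMap.adjoint (Dmu f x θ h j k))
              ((ContinuousLinearMap.adjoint (fderiv ℝ g (hsm f x θ h j))) (e j))), v⟫ := by
        rw [hG, sum_inner]
        refine Finset.sum_congr rfl fun k _ => ?_
        rw [heps k, hBk k, map_sum, sum_inner]
        refine Finset.sum_congr rfl fun j _ => ?_
        rfl
      rw [hLHS]
      exact (Finset.sum_comm' (by
        intro a b
        simp only [Finset.mem_Icc]
        omega) ).symm
    rw [hEq]
    exact htot
  exact hGrad.gradient
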